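/- Let n ≥ 1 and k : Fin n → ℕ with each k_i ≥ 1, and N = ∑_i k_i. For all g_i ∈ J_{k i}, the underlying permutation of the cactus block sum is the block sum of the underlying permutations: π_N(β_k(g_1, …, g_n)) = β^Σ_k(π_{k_1}(g_1), …, π_{k_n}(g_n)) in Σ_N. -/

import Mathlib

/-- Splitting a sigma type over `Fin (n+1)` as first block plus the rest. -/
def sigmaFinSuccEquiv (n : ℕ) (β : Fin (n + 1) → Type*) :
    ((i : Fin (n + 1)) × β i) ≃ β 0 ⊕ ((i : Fin n) × β i.succ) where
  toFun x := Fin.cases (motive := fun i => β i → β 0 ⊕ ((i : Fin n) × β i.succ))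
    (fun b => Sum.inl b) (fun i b => Sum.inr ⟨i, b⟩) x.1 x.2
  invFun x := Sum.elim (fun b => ⟨0, b⟩) (fun p => ⟨p.1.succ, p.2⟩) x
  left_inv := by
    rintro ⟨i, b⟩
    induction i using Fin.cases <;> simp
  right_inv := by rintro (b | ⟨i, b⟩) <;> simp

/-- The canonical order-preserving equivalence `(Σ i : Fin n, Fin (k i)) ≃ Fin (∑ i, k i)`,
putting the blocks in order. -/
def finSigmaFinEquivBlocks : ∀ {n : ℕ} {k : Fin n → ℕ}, ((i : Fin n) × Fin (k i)) ≃ Fin (∑ i, k i)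
  | 0, k => (Equiv.equivOfIsEmpty _ (Fin 0)).trans (finCongr (Fin.sum_univ_zero k).symm)
  | n + 1, k =>
      ((sigmaFinSuccEquiv n fun i => Fin (k i)).trans
        ((Equiv.refl (Fin (k 0))).sumCongr (finSigmaFinEquivBlocks (k := fun i => k i.succ)))).trans
        (finSumFinEquiv.trans (finCongr (Fin.sum_univ_succ k).symm))

/-- The block sum `β_k(h₁, …, h_n)` of permutations `h i : Σ_{k i}`:
on the sigma type it is `(i, j) ↦ (i, h i j)`. -/
def blockSum {n : ℕ} {k : Fin n → ℕ} (h : (i : Fin n) → Equiv.Perm (Fin (k i))) :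
    Equiv.Perm (Fin (∑ i, k i)) :=
  finSigmaFinEquivBlocks.symm.trans ((Equiv.sigmaCongrRight h).trans finSigmaFinEquivBlocks)

/-- The block permutation `δ_{n;k}(σ)`: on the sigma type it is `(i, j) ↦ (σ i, j)`,
regarded as a permutation of `Fin (∑ i, k i)` via `∑ i, k (σ⁻¹ i) = ∑ i, k i`. -/
def blockPerm {n : ℕ} (k : Fin n → ℕ) (σ : Equiv.Perm (Fin n)) :
    Equiv.Perm (Fin (∑ i, k i)) :=
  finSigmaFinEquivBlocks.symm.trans
    ((Equiv.sigmaCongrLeft' (β := fun i => Fin (k i)) σ).trans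
      (finSigmaFinEquivBlocks.trans (finCongr (Equiv.sum_comp σ.symm k))))

/-- Transport of permutations along an equality of cardinalities. -/
def permCast {a b : ℕ} (h : a = b) : Equiv.Perm (Fin a) ≃ Equiv.Perm (Fin b) :=
  (finCongr h).permCongr

/-- Flattening a doubly indexed family of sizes. -/
def flatten {n : ℕ} {k : Fin n → ℕ} (m : (i : Fin n) → Fin (k i) → ℕ) :
    Fin (∑ i, k i) → ℕ :=
  fun y => m (finSigmaFinEquivBlocks.symm y).1 (finSigmaFinEquivBlocks.symm y).2

/-- The canonical identification of the double sum with the sum of the flattened family. -/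
theorem sum_flatten {n : ℕ} {k : Fin n → ℕ} (m : (i : Fin n) → Fin (k i) → ℕ) :
    ∑ i, ∑ j, m i j = ∑ y, flatten m y := by
  rw [← Equiv.sum_comp (finSigmaFinEquivBlocks (k := k)) (flatten m),
    ← Finset.univ_sigma_univ, Finset.sum_sigma]
  exact Finset.sum_congr rfl fun a _ => Finset.sum_congr rfl fun s _ => by
    simp only [flatten]
    conv_rhs => rw [Equiv.symm_apply_apply]

/-- Generators `s_{p,q}`, `1 ≤ p < q ≤ n`, of the `n`-fruit cactus group. -/
def CactusGen (n : ℕ) : Type :=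
  { pq : ℕ × ℕ // 1 ≤ pq.1 ∧ pq.1 < pq.2 ∧ pq.2 ≤ n }

/-- The defining relations of the `n`-fruit cactus group, as elements of the free group:
(i) `s_{p,q}² = e`; (ii) `s_{p,q}s_{k,l} = s_{k,l}s_{p,q}` for disjoint intervals;
(iii) `s_{p,q}s_{k,l} = s_{p+q-l,p+q-k}s_{p,q}` for `p ≤ k < l ≤ q`. -/
def cactusRels (n : ℕ) : Set (FreeGroup (CactusGen n)) :=
  { x |
    (∃ (p q : ℕ) (h : 1 ≤ p ∧ p < q ∧ q ≤ n),
      x = FreeGroup.of (⟨(p, q), h⟩ : CactusGen n) * FreeGroup.of ⟨(p, q), h⟩) ∨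
    (∃ (p q k l : ℕ) (h : 1 ≤ p ∧ p < q ∧ q ≤ n) (h' : 1 ≤ k ∧ k < l ∧ l ≤ n),
      (q < k ∨ l < p) ∧
      x = FreeGroup.of (⟨(p, q), h⟩ : CactusGen n) * FreeGroup.of ⟨(k, l), h'⟩ *
        (FreeGroup.of (⟨(k, l), h'⟩ : CactusGen n) * FreeGroup.of ⟨(p, q), h⟩)⁻¹) ∨
    (∃ (p q k l : ℕ) (h : 1 ≤ p ∧ p < q ∧ q ≤ n) (h' : 1 ≤ k ∧ k < l ∧ l ≤ n)
        (h'' : 1 ≤ p + q - l ∧ p + q - l < p + q - k ∧ p + q - k ≤ n),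
      (p ≤ k ∧ l ≤ q) ∧
      x = FreeGroup.of (⟨(p, q), h⟩ : CactusGen n) * FreeGroup.of ⟨(k, l), h'⟩ *
        (FreeGroup.of (⟨(p + q - l, p + q - k), h''⟩ : CactusGen n) *
          FreeGroup.of ⟨(p, q), h⟩)⁻¹) }

/-- The `n`-fruit cactus group `J_n`, as a presented group. -/
def CactusGroup (n : ℕ) : Type :=
  PresentedGroup (cactusRels n)

instance (n : ℕ) : Group (CactusGroup n) :=
  inferInstanceAs (Group (PresentedGroup (cactusRels n)))

/-- The generator `s_{p,q}` of the cactus group `J_n`. -/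
def s {n : ℕ} (p q : ℕ) (h : 1 ≤ p ∧ p < q ∧ q ≤ n) : CactusGroup n :=
  PresentedGroup.of ⟨(p, q), h⟩

/-- The generator `s_{p,q}` of `J_n` extended by the convention that `s_{p,p}` denotes the
identity element. -/
def sE {n : ℕ} (p q : ℕ) (h : 1 ≤ p ∧ p ≤ q ∧ q ≤ n) : CactusGroup n :=
  if hlt : p < q then s p q ⟨h.1, hlt, h.2.2⟩ else 1

/-- Transport of cactus group elements along an equality. -/
def Jcast {a b : ℕ} (h : a = b) (x : CactusGroup a) : CactusGroup b := h ▸ x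

/-- `partialSum k i = ∑_{j < i} k j`. -/
def partialSum {n : ℕ} (k : Fin n → ℕ) (i : Fin n) : ℕ :=
  ∑ j ∈ Finset.Iio i, k j

theorem partialSum_add_le {n : ℕ} (k : Fin n → ℕ) (i : Fin n) :
    partialSum k i + k i ≤ ∑ j, k j := by
  have h1 : partialSum k i + k i = ∑ j ∈ Finset.Iic i, k j := by
    rw [partialSum, add_comm, ← Finset.sum_insert (by simp), Finset.Iio_insert]
  rw [h1]
  exact Finset.sum_le_sum_of_subset (Finset.subset_univ _)

/-- The interval reversal `ŝ_{p,q} ∈ Σ_n` (1-indexed letters): it fixes `i` for `i < p` or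
`i > q` and sends `i` to `p + q - i` for `p ≤ i ≤ q`.  Here `Fin n` is regarded as the set
of letters `{1, …, n}` via `i ↦ i + 1`. -/
def sHat (n p q : ℕ) : Equiv.Perm (Fin n) :=
  Function.Involutive.toPerm
    (fun i => if h : 1 ≤ p ∧ p ≤ i.1 + 1 ∧ i.1 + 1 ≤ q ∧ q ≤ n then
        ⟨p + q - (i.1 + 1) - 1, by omega⟩ else i)
    (by
      intro i
      dsimp only
      by_cases h : 1 ≤ p ∧ p ≤ i.1 + 1 ∧ i.1 + 1 ≤ q ∧ q ≤ n
      · rw [dif_pos h, dif_pos (by dsimp only; omega)]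
        exact Fin.ext (by dsimp only; omega)
      · rw [dif_neg h, dif_neg h])

theorem partialSum_eq_if {n : ℕ} (k : Fin n → ℕ) (i : Fin n) :
    partialSum k i = ∑ j, if j < i then k j else 0 := by
  rw [partialSum, show Finset.Iio i = Finset.univ.filter (· < i) by ext; simp,
    Finset.sum_filter]

theorem partialSum_succ {n : ℕ} (k : Fin (n + 1) → ℕ) (i : Fin n) :
    partialSum k i.succ = k 0 + partialSum (fun j => k j.succ) i := by
  rw [partialSum_eq_if, partialSum_eq_if, Fin.sum_univ_succ]
  simp [Fin.succ_lt_succ_iff, Fin.succ_pos]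

theorem partialSum_mono {n : ℕ} (k : Fin n → ℕ) {a i : Fin n} (h : a < i) :
    partialSum k a + k a ≤ partialSum k i := by
  have h1 : partialSum k a + k a = ∑ j ∈ Finset.Iic a, k j := by
    rw [partialSum, add_comm, ← Finset.sum_insert (by simp), Finset.Iio_insert]
  rw [h1, partialSum]
  exact Finset.sum_le_sum_of_subset fun x hx => by
    simp only [Finset.mem_Iic] at hx; simp only [Finset.mem_Iio]; exact lt_of_le_of_lt hx h

theorem finSigmaFinEquiv_val : ∀ {n : ℕ} {k : Fin n → ℕ} (a : Fin n) (b : Fin (k a)),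
    ((finSigmaFinEquivBlocks ⟨a, b⟩ : Fin (∑ i, k i)) : ℕ) = partialSum k a + b
  | 0, _, a, _ => a.elim0
  | n + 1, k, a, b => by
    induction a using Fin.cases with
    | zero =>
      simp [finSigmaFinEquivBlocks, sigmaFinSuccEquiv, partialSum]
    | succ i =>
      have IH := finSigmaFinEquiv_val (k := fun j => k j.succ) i b
      simp only [finSigmaFinEquivBlocks, sigmaFinSuccEquiv, Equiv.trans_apply, Equiv.coe_fn_mk,
        Fin.cases_succ, Equiv.sumCongr_apply, Sum.map_inr, finSumFinEquiv_apply_right,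
        finCongr_apply, Fin.coe_cast, Fin.coe_natAdd, partialSum_succ]
      omega

theorem blockSum_apply' {n : ℕ} {k : Fin n → ℕ} (h : (i : Fin n) → Equiv.Perm (Fin (k i)))
    (a : Fin n) (b : Fin (k a)) :
    blockSum h (finSigmaFinEquivBlocks ⟨a, b⟩) = finSigmaFinEquivBlocks ⟨a, h a b⟩ := by
  simp [blockSum]

/-- The block sum as a monoid homomorphism. -/
def blockSumHom {n : ℕ} {k : Fin n → ℕ} :
    ((i : Fin n) → Equiv.Perm (Fin (k i))) →* Equiv.Perm (Fin (∑ i, k i)) where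
  toFun := blockSum
  map_one' := by
    ext y
    simp [blockSum]
  map_mul' h h' := by
    ext y
    simp [blockSum, Equiv.Perm.mul_apply]

theorem sHat_val (n p q : ℕ) (y : Fin n) :
    (sHat n p q y : ℕ) = if 1 ≤ p ∧ p ≤ y.1 + 1 ∧ y.1 + 1 ≤ q ∧ q ≤ n then
      p + q - (y.1 + 1) - 1 else y.1 := by
  by_cases h : 1 ≤ p ∧ p ≤ y.1 + 1 ∧ y.1 + 1 ≤ q ∧ q ≤ n
  · simp only [sHat, Function.Involutive.toPerm, Equiv.coe_fn_mk, dif_pos h, if_pos h]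
  · simp only [sHat, Function.Involutive.toPerm, Equiv.coe_fn_mk, dif_neg h, if_neg h]

theorem blockSum_mulSingle {n : ℕ} {k : Fin n → ℕ} (i : Fin n) (p q : ℕ)
    (hpq : 1 ≤ p ∧ p < q ∧ q ≤ k i) :
    blockSum (Pi.mulSingle i (sHat (k i) p q)) =
      sHat (∑ j, k j) (p + partialSum k i) (q + partialSum k i) := by
  have hle := partialSum_add_le k i
  ext y
  rcases h : finSigmaFinEquivBlocks.symm y with ⟨a, b⟩
  have hy : y = finSigmaFinEquivBlocks ⟨a, b⟩ := by rw [← h, Equiv.apply_symm_apply]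
  subst hy
  rw [blockSum_apply']
  have hb := b.isLt
  by_cases hai : a = i
  · subst hai
    rw [Pi.mulSingle_eq_same]
    rw [finSigmaFinEquiv_val, sHat_val, sHat_val, finSigmaFinEquiv_val]
    split_ifs with h1 h2 h2 <;> omega
  · rw [Pi.mulSingle_eq_of_ne hai, Equiv.Perm.one_apply]
    rw [finSigmaFinEquiv_val, sHat_val, finSigmaFinEquiv_val]
    rcases lt_or_gt_of_ne hai with hlt | hgt
    · have := partialSum_mono k hlt
      rw [if_neg (by omega)]
    · have := partialSum_mono k hgt
      have := partialSum_add_le k a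
      rw [if_neg (by omega)]

/-- Applying the family `π` componentwise, as a monoid homomorphism. -/
def piApplyHom {n : ℕ} (k : Fin n → ℕ) (π : ∀ m : ℕ, CactusGroup m →* Equiv.Perm (Fin m)) :
    ((i : Fin n) → CactusGroup (k i)) →* ((i : Fin n) → Equiv.Perm (Fin (k i))) where
  toFun g i := π (k i) (g i)
  map_one' := by funext i; simp
  map_mul' g h := by funext i; simp

/-- The underlying permutation of the cactus block sum is the block sum of the underlying
permutations.  Here `π` is the family of homomorphisms `J_m → Σ_m` determined by
`π(s_{p,q}) = ŝ_{p,q}` and `β` is the cactus block sum homomorphism determined by its values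
on the generators of the factors. -/
theorem pi_cactus_blockSum (n : ℕ) (hn : 1 ≤ n) (k : Fin n → ℕ) (hk : ∀ i, 1 ≤ k i)
    (π : ∀ m : ℕ, CactusGroup m →* Equiv.Perm (Fin m))
    (hπ : ∀ (m p q : ℕ) (h : 1 ≤ p ∧ p < q ∧ q ≤ m), π m (s p q h) = sHat m p q)
    (β : ((i : Fin n) → CactusGroup (k i)) →* CactusGroup (∑ i, k i))
    (hβ : ∀ (i : Fin n) (p q : ℕ) (h : 1 ≤ p ∧ p < q ∧ q ≤ k i),
      β (Pi.mulSingle i (s p q h)) =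
        s (p + partialSum k i) (q + partialSum k i)
          ⟨by omega, by omega, by have := partialSum_add_le k i; omega⟩)
    (g : (i : Fin n) → CactusGroup (k i)) :
    π (∑ i, k i) (β g) = blockSum (fun i => π (k i) (g i)) := by
  have main : (π (∑ i, k i)).comp β = blockSumHom.comp (piApplyHom k π) := by
    apply MonoidHom.pi_ext
    intro i x
    have hsingle : piApplyHom k π (Pi.mulSingle i x) = Pi.mulSingle i (π (k i) x) := by
      funext j
      simp only [piApplyHom, MonoidHom.coe_mk, OneHom.coe_mk]
      by_cases hj : j = i
      · subst hj
        rw [Pi.mulSingle_eq_same, Pi.mulSingle_eq_same]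
      · rw [Pi.mulSingle_eq_of_ne hj, Pi.mulSingle_eq_of_ne hj, map_one]
    rw [MonoidHom.comp_apply, MonoidHom.comp_apply, hsingle]
    have hAB : (((π (∑ j, k j)).comp β).comp
          (MonoidHom.mulSingle (fun j => CactusGroup (k j)) i))
        = (blockSumHom.comp
            (MonoidHom.mulSingle (fun j => Equiv.Perm (Fin (k j))) i)).comp (π (k i)) := by
      apply PresentedGroup.ext
      rintro ⟨⟨p, q⟩, hpq⟩
      show π (∑ j, k j) (β (Pi.mulSingle i (s p q hpq)))
          = blockSumHom (Pi.mulSingle i (π (k i) (s p q hpq)))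
      rw [hβ, hπ, hπ]
      exact (blockSum_mulSingle i p q hpq).symm
    have h2 := DFunLike.congr_fun hAB x
    simpa using h2
  have h3 := DFunLike.congr_fun main g
  simpa [piApplyHom, blockSumHom] using h3
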